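/- One-soliton free propagation for the reduced A_1-type dynamics: with carrier update rules given by R((1^i 2^{l-i}) ⊗ 2) = 1 ⊗ (1^{i-1} 2^{l-i+1}) for i > 0, R((2^l) ⊗ 2) = 2 ⊗ (2^l), R((1^i 2^{l-i}) ⊗ 1) = 2 ⊗ (1^{i+1} 2^{l-i-1}) for i < l, and R((1^l) ⊗ 1) = 1 ⊗ (1^l), the time evolution T_k applied to the state 2^l 1^{L-l} (carrier initialized at 1^k, i.e., capacity k) yields 1^{min(k,l)} 2^l 1^{L-l-min(k,l)}, provided L ≥ l + min(k,l); i.e., the soliton of length l moves right by exactly min(k,l) steps. -/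

import Mathlib

/-- One carrier update step. The carrier is `(i1, i2)` (numbers of `1`s and `2`s it
holds); a site letter is a `Bool` (`false` = 1, `true` = 2). -/
def step (c : ℕ × ℕ) (a : Bool) : Bool × (ℕ × ℕ) :=
  if a then
    if 0 < c.1 then (false, (c.1 - 1, c.2 + 1)) else (true, c)
  else
    if 0 < c.2 then (true, (c.1 + 1, c.2 - 1)) else (false, c)

/-- Sweep the carrier left to right through a word. -/
def sweep : ℕ × ℕ → List Bool → List Bool
  | _, [] => []
  | c, a :: as => (step c a).1 :: sweep (step c a).2 as

lemma sweep_true (n : ℕ) : ∀ a b : ℕ, ∀ rest : List Bool, n ≤ a →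
    sweep (a, b) (List.replicate n true ++ rest) =
      List.replicate n false ++ sweep (a - n, b + n) rest := by
  induction n with
  | zero => intro a b rest _; simp
  | succ n ih =>
    intro a b rest hn
    have ha : 0 < a := by omega
    have h1 : a - 1 - n = a - (n + 1) := by omega
    have h2 : b + 1 + n = b + (n + 1) := by omega
    have h3 := ih (a - 1) (b + 1) rest (by omega)
    rw [h1, h2] at h3
    simp [List.replicate_succ, sweep, step, ha, h3]

lemma sweep_true_zero (n : ℕ) (b : ℕ) (rest : List Bool) :
    sweep (0, b) (List.replicate n true ++ rest) =
      List.replicate n true ++ sweep (0, b) rest := by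
  induction n with
  | zero => simp
  | succ n ih => simp [List.replicate_succ, sweep, step, ih]

lemma sweep_false (n : ℕ) : ∀ a b : ℕ, ∀ rest : List Bool, n ≤ b →
    sweep (a, b) (List.replicate n false ++ rest) =
      List.replicate n true ++ sweep (a + n, b - n) rest := by
  induction n with
  | zero => intro a b rest _; simp
  | succ n ih =>
    intro a b rest hn
    have hb : 0 < b := by omega
    have h1 : a + 1 + n = a + (n + 1) := by omega
    have h2 : b - 1 - n = b - (n + 1) := by omega
    have h3 := ih (a + 1) (b - 1) rest (by omega)
    rw [h1, h2] at h3
    simp [List.replicate_succ, sweep, step, hb, h3]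

lemma sweep_false_zero (n : ℕ) (a : ℕ) :
    sweep (a, 0) (List.replicate n false) = List.replicate n false := by
  induction n with
  | zero => simp [sweep]
  | succ n ih => simp [List.replicate_succ, sweep, step, ih]

theorem stmt_19 (k l L : ℕ) (hL : l + min k l ≤ L) :
    sweep (k, 0) (List.replicate l true ++ List.replicate (L - l) false) =
      List.replicate (min k l) false ++ List.replicate l true ++
        List.replicate (L - l - min k l) false := by
  rcases le_or_gt l k with h | h
  · have hm : min k l = l := by omega
    rw [hm, sweep_true l k 0 _ h]
    have hsplit : List.replicate (L - l) false =
        List.replicate l false ++ List.replicate (L - l - l) false := by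
      rw [← List.replicate_add]; congr 1; omega
    rw [hsplit, sweep_false l (k - l) (0 + l) _ (by omega)]
    have h1 : k - l + l = k := by omega
    have h2 : 0 + l - l = 0 := by omega
    rw [h1, h2, sweep_false_zero, List.append_assoc]
  · have hm : min k l = k := by omega
    rw [hm]
    have hsplit : List.replicate l true =
        List.replicate k true ++ List.replicate (l - k) true := by
      rw [← List.replicate_add]; congr 1; omega
    rw [hsplit, List.append_assoc, sweep_true k k 0 _ le_rfl]
    have h1 : k - k = 0 := by omega
    rw [h1, sweep_true_zero]
    have hsplit2 : List.replicate (L - l) false =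
        List.replicate k false ++ List.replicate (L - l - k) false := by
      rw [← List.replicate_add]; congr 1; omega
    rw [hsplit2, sweep_false k 0 (0 + k) _ (by omega)]
    have h2 : 0 + k - k = 0 := by omega
    rw [h2, sweep_false_zero]
    simp only [← List.append_assoc, ← List.replicate_add]
    congr 3
    omega
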